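/- arXiv:1111.0094 — 6 statements merged into one kernel-verified Lean document; each statement's English description precedes it below -/
import Mathlib

section
/- For every positive integer n, the total number of 1's occurring among all partitions of n equals the sum of P(i) for i = 0 to n-1; i.e., Q_1(n) = P(0) + P(1) + ... + P(n-1). -/
/-- Number of partitions of `n`. -/
def P (n : ℕ) : ℕ := Fintype.card (Nat.Partition n)

/-- Partition function extended to `ℤ`, zero for negative arguments. -/
def PZ (z : ℤ) : ℕ := if z < 0 then 0 else P z.toNat

/-- Total number of occurrences of the part `k` over all partitions of `n`. -/
def Q (k n : ℕ) : ℕ := ∑ p : Nat.Partition n, Multiset.count k p.parts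

/-- `Q` extended to `ℤ`, zero for non-positive arguments. -/
def QZ (k : ℕ) (z : ℤ) : ℕ := if z ≤ 0 then 0 else Q k z.toNat

/-- Sum over all partitions of `n` of the number of distinct part-sizes. -/
def S (n : ℕ) : ℕ := ∑ p : Nat.Partition n, p.parts.toFinset.card

/-- Number of pairs `(λ, m)` with `λ` a partition of `n` and `m` a part-size
occurring at least `k` times in `λ`. -/
def V (k n : ℕ) : ℕ :=
  ∑ p : Nat.Partition n, (p.parts.toFinset.filter (fun m => k ≤ p.parts.count m)).card

/-- Adding a part `1` to a partition of `m` gives a partition of `m+1`. -/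
def addOne {m : ℕ} (q : Nat.Partition m) : Nat.Partition (m + 1) where
  parts := 1 ::ₘ q.parts
  parts_pos := by
    intro i hi
    rcases Multiset.mem_cons.1 hi with h | h
    · simp [h]
    · exact q.parts_pos h
  parts_sum := by simp [q.parts_sum, add_comm]

/-- Partitions of `m` are in bijection with partitions of `m+1` containing a `1`. -/
def addOneEquiv (m : ℕ) : Nat.Partition m ≃ {p : Nat.Partition (m + 1) // 1 ∈ p.parts} where
  toFun q := ⟨addOne q, by simp [addOne]⟩
  invFun p :=
    { parts := p.1.parts.erase 1
      parts_pos := fun hi => p.1.parts_pos (Multiset.mem_of_mem_erase hi)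
      parts_sum := by
        have h := Multiset.cons_erase p.2
        have h2 : (1 ::ₘ p.1.parts.erase 1).sum = m + 1 := by rw [h, p.1.parts_sum]
        simp only [Multiset.sum_cons] at h2
        omega }
  left_inv q := by
    ext : 1
    simp [addOne]
  right_inv p := by
    ext : 1
    simp [addOne, Multiset.cons_erase p.2]

lemma Q_rec (m : ℕ) : Q 1 (m + 1) = Q 1 m + P m := by
  have h1 : Q 1 (m + 1)
      = ∑ p : {p : Nat.Partition (m + 1) // 1 ∈ p.parts}, Multiset.count 1 p.1.parts := by
    have he := Finset.sum_subtype (p := fun p : Nat.Partition (m+1) => 1 ∈ p.parts) (F := Subtype.fintype _)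
      (Finset.filter (fun p : Nat.Partition (m+1) => 1 ∈ p.parts) Finset.univ) (by simp)
      (fun p => Multiset.count 1 p.parts)
    rw [Q, ← Finset.sum_filter_of_ne (fun p _ h => Multiset.count_ne_zero.1 h), he]
  rw [h1, ← Equiv.sum_comp (addOneEquiv m)]
  simp only [addOneEquiv, addOne, Equiv.coe_fn_mk, Multiset.count_cons_self]
  rw [Finset.sum_add_distrib]
  simp [Q, P, Finset.card_univ]

theorem stmt_1 (n : ℕ) (hn : 0 < n) :
    Q 1 n = ∑ i ∈ Finset.range n, P i := by
  clear hn
  induction n with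
  | zero => simp [Q]
  | succ m ih => rw [Q_rec, ih, Finset.sum_range_succ]
end

section
/- (Stanley's theorem) For every positive integer n, the total number of 1's occurring among all partitions of n equals the sum over all partitions of n of the number of distinct parts of that partition; i.e., Q_1(n) = S(n). -/
lemma aux_card (n : ℕ) (s : Multiset ℕ) (hpos : ∀ x ∈ s, 0 < x) (hd : s.sum ≤ n) :
    Fintype.card {p : Nat.Partition n // s ≤ p.parts} = P (n - s.sum) := by
  apply Fintype.card_congr
  refine
    { toFun := fun p => ⟨p.1.parts - s,
        fun hx => p.1.parts_pos (Multiset.mem_of_le (Multiset.sub_le_self _ _) hx), ?_⟩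
      invFun := fun q => ⟨⟨q.parts + s,
        by
          intro x hx
          rcases Multiset.mem_add.mp hx with h | h
          · exact q.parts_pos h
          · exact hpos x h,
        by rw [Multiset.sum_add, q.parts_sum]; omega⟩,
        Multiset.le_add_left _ _⟩
      left_inv := fun p => by
        apply Subtype.ext
        apply Nat.Partition.ext
        exact tsub_add_cancel_of_le p.2
      right_inv := fun q => by
        apply Nat.Partition.ext
        exact add_tsub_cancel_right _ _ }
  have h := p.2
  have heq : (p.1.parts - s) + s = p.1.parts := tsub_add_cancel_of_le h
  have hsum : (p.1.parts - s).sum + s.sum = n := by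
    rw [← Multiset.sum_add, heq, p.1.parts_sum]
  omega

lemma indicator_sum (n c : ℕ) (hc : c ≤ n) :
    ∑ j ∈ Finset.Icc 1 n, (if j ≤ c then 1 else 0) = c := by
  rw [← Finset.card_filter]
  have : (Finset.Icc 1 n).filter (fun j => j ≤ c) = Finset.Icc 1 c := by
    ext j; simp [Finset.mem_Icc]; omega
  rw [this, Nat.card_Icc]; omega

lemma subtype_card_sum (cond : Nat.Partition n → Prop) [DecidablePred cond] :
    ∑ p : Nat.Partition n, (if cond p then 1 else 0) = Fintype.card {p : Nat.Partition n // cond p} := by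
  rw [← Finset.card_filter, Fintype.card_subtype]

theorem stmt_3 (n : ℕ) (hn : 0 < n) : Q 1 n = S n := by
  have hQ : Q 1 n = ∑ j ∈ Finset.Icc 1 n, P (n - j) := by
    unfold Q
    have hc : ∀ p : Nat.Partition n, p.parts.count 1 ≤ n := by
      intro p
      have h1 : Multiset.replicate (p.parts.count 1) 1 ≤ p.parts :=
        Multiset.le_count_iff_replicate_le.mp le_rfl
      obtain ⟨u, hu⟩ := Multiset.le_iff_exists_add.mp h1
      have := p.parts_sum
      rw [hu, Multiset.sum_add, Multiset.sum_replicate, smul_eq_mul, mul_one] at this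
      omega
    calc ∑ p : Nat.Partition n, p.parts.count 1
        = ∑ p : Nat.Partition n, ∑ j ∈ Finset.Icc 1 n,
            (if j ≤ p.parts.count 1 then 1 else 0) := by
          refine Finset.sum_congr rfl fun p _ => ?_
          rw [indicator_sum n _ (hc p)]
      _ = ∑ j ∈ Finset.Icc 1 n, ∑ p : Nat.Partition n,
            (if j ≤ p.parts.count 1 then 1 else 0) := Finset.sum_comm
      _ = ∑ j ∈ Finset.Icc 1 n, P (n - j) := by
          refine Finset.sum_congr rfl fun j hj => ?_
          simp only [Finset.mem_Icc] at hj
          rw [subtype_card_sum]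
          have : ∀ p : Nat.Partition n, (j ≤ p.parts.count 1) ↔
              (Multiset.replicate j 1 ≤ p.parts) := fun p =>
            Multiset.le_count_iff_replicate_le
          rw [Fintype.card_congr (Equiv.subtypeEquivRight this)]
          have := aux_card n (Multiset.replicate j 1)
            (by intro x hx; rw [Multiset.eq_of_mem_replicate hx]; norm_num)
            (by simp [Multiset.sum_replicate]; omega)
          simpa [Multiset.sum_replicate] using this
  have hS : S n = ∑ j ∈ Finset.Icc 1 n, P (n - j) := by
    unfold S
    have hmem : ∀ (p : Nat.Partition n) (m : ℕ), m ∈ p.parts → 1 ≤ m ∧ m ≤ n := by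
      intro p m hm
      refine ⟨p.parts_pos hm, ?_⟩
      calc m ≤ p.parts.sum := Multiset.single_le_sum (fun x _ => Nat.zero_le x) _ hm
        _ = n := p.parts_sum
    calc ∑ p : Nat.Partition n, p.parts.toFinset.card
        = ∑ p : Nat.Partition n, ∑ m ∈ Finset.Icc 1 n,
            (if m ∈ p.parts then 1 else 0) := by
          refine Finset.sum_congr rfl fun p _ => ?_
          rw [← Finset.card_filter]
          congr 1
          ext m
          simp only [Finset.mem_filter, Finset.mem_Icc, Multiset.mem_toFinset]
          constructor
          · intro h; exact ⟨hmem p m h, h⟩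
          · tauto
      _ = ∑ m ∈ Finset.Icc 1 n, ∑ p : Nat.Partition n,
            (if m ∈ p.parts then 1 else 0) := Finset.sum_comm
      _ = ∑ j ∈ Finset.Icc 1 n, P (n - j) := by
          refine Finset.sum_congr rfl fun m hm => ?_
          rw [subtype_card_sum]
          have : ∀ p : Nat.Partition n, (m ∈ p.parts) ↔ ({m} : Multiset ℕ) ≤ p.parts :=
            fun p => (Multiset.singleton_le).symm
          simp only [Finset.mem_Icc] at hm
          rw [Fintype.card_congr (Equiv.subtypeEquivRight this)]
          have := aux_card n {m} (by intro x hx; rw [Multiset.mem_singleton.mp hx]; exact hm.1) (by simpa using hm.2)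
          simpa using this
  rw [hQ, hS]
end

section
/- (Generalized Stanley theorem) For every positive integer n and every positive integer k, S(n) = Q_k(n) + Q_k(n+1) + ... + Q_k(n+k-1), i.e., the sum over all partitions of n of the number of distinct parts equals the sum of Q_k(n+i) for i = 0 to k-1. -/
lemma part_le {n : ℕ} (p : Nat.Partition n) {m : ℕ} (hm : m ∈ p.parts) : m ≤ n := by
  rw [← p.parts_sum]
  exact Multiset.single_le_sum (fun x _ => Nat.zero_le x) m hm

def insertEquiv (m n : ℕ) (hm : 0 < m) :
    Nat.Partition n ≃ {p : Nat.Partition (n + m) // m ∈ p.parts} where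
  toFun q := ⟨⟨m ::ₘ q.parts, by
      intro i hi
      rcases Multiset.mem_cons.1 hi with rfl | hi
      · exact hm
      · exact q.parts_pos hi, by simp [q.parts_sum, add_comm]⟩, by simp⟩
  invFun p := ⟨p.1.parts.erase m, fun hi => p.1.parts_pos (Multiset.mem_of_mem_erase hi), by
      have h := congrArg Multiset.sum (Multiset.cons_erase p.2)
      rw [Multiset.sum_cons, p.1.parts_sum] at h
      omega⟩
  left_inv q := by
    ext1
    simp [Multiset.erase_cons_head]
  right_inv p := by
    ext1
    ext1
    simp [Multiset.cons_erase p.2]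

lemma card_mem (m n : ℕ) (hm : 0 < m) :
    (Finset.univ.filter (fun p : Nat.Partition (n + m) => m ∈ p.parts)).card = P n := by
  classical
  rw [← Fintype.card_subtype, ← Fintype.card_congr (insertEquiv m n hm)]
  rfl

lemma Qzero {k m : ℕ} (h : m < k) : Q k m = 0 := by
  apply Finset.sum_eq_zero
  intro p _
  rw [Multiset.count_eq_zero]
  intro hk
  exact absurd (part_le p hk) (by omega)

lemma Qrec (k n : ℕ) (hk : 0 < k) : Q k (n + k) = P n + Q k n := by
  classical
  unfold Q
  rw [← Finset.sum_filter_add_sum_filter_not Finset.univ (fun p => k ∈ p.parts)]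
  have h2 : ∑ p ∈ Finset.univ.filter (fun p : Nat.Partition (n+k) => ¬ k ∈ p.parts),
      Multiset.count k p.parts = 0 :=
    Finset.sum_eq_zero fun p hp =>
      Multiset.count_eq_zero.2 (Finset.mem_filter.1 hp).2
  rw [h2, add_zero]
  have h3 : ∑ p ∈ Finset.univ.filter (fun p : Nat.Partition (n+k) => k ∈ p.parts),
      Multiset.count k p.parts
      = ∑ p : {p : Nat.Partition (n+k) // k ∈ p.parts}, Multiset.count k p.1.parts := by
    rw [Finset.sum_subtype]
    intro x; simp
  rw [h3, ← Equiv.sum_comp (insertEquiv k n hk)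
    (fun p => Multiset.count k p.1.parts)]
  simp [insertEquiv, Multiset.count_cons_self, Finset.sum_add_distrib, P, Q, add_comm]

lemma S_eq (n : ℕ) : S n = ∑ j ∈ Finset.range n, P j := by
  classical
  have key : ∀ p : Nat.Partition n, p.parts.toFinset.card =
      ((Finset.Icc 1 n).filter (fun m => m ∈ p.parts)).card := by
    intro p
    congr 1
    ext m
    simp only [Multiset.mem_toFinset, Finset.mem_filter, Finset.mem_Icc]
    constructor
    · intro h
      exact ⟨⟨p.parts_pos h, part_le p h⟩, h⟩
    · exact fun h => h.2
  unfold S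
  simp only [key, Finset.card_filter]
  rw [Finset.sum_comm]
  have h2 : ∀ m ∈ Finset.Icc 1 n,
      (∑ p : Nat.Partition n, if m ∈ p.parts then 1 else 0) = P (n - m) := by
    intro m hm
    rw [Finset.mem_Icc] at hm
    rw [← Finset.card_filter]
    obtain ⟨j, rfl⟩ : ∃ j, n = j + m := ⟨n - m, by omega⟩
    rw [Nat.add_sub_cancel]
    exact card_mem m j (by omega)
  rw [Finset.sum_congr rfl h2]
  apply Finset.sum_nbij' (fun m => n - m) (fun j => n - j)
  · intro a ha; rw [Finset.mem_Icc] at ha; rw [Finset.mem_range]; omega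
  · intro a ha; rw [Finset.mem_range] at ha; rw [Finset.mem_Icc]; omega
  · intro a ha; rw [Finset.mem_Icc] at ha; omega
  · intro a ha; rw [Finset.mem_range] at ha; omega
  · intro a ha; rfl

lemma T (k : ℕ) (hk : 0 < k) :
    ∀ n, ∑ i ∈ Finset.range k, Q k (n + i) = ∑ j ∈ Finset.range n, P j := by
  intro n
  induction n with
  | zero =>
    simp only [Finset.range_zero, Finset.sum_empty]
    exact Finset.sum_eq_zero fun i hi =>
      Qzero (by simpa using Finset.mem_range.1 hi)
  | succ n ih =>
    have e1 : ∑ i ∈ Finset.Ico 1 (k+1), Q k (n+i)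
        = ∑ i ∈ Finset.range k, Q k (n+1+i) := by
      rw [Finset.sum_Ico_eq_sum_range]
      simp [show ∀ i, n + (1 + i) = n + 1 + i from fun i => by omega]
    have h1 : ∑ i ∈ Finset.Ico 0 (k+1), Q k (n+i)
        = Q k n + ∑ i ∈ Finset.Ico 1 (k+1), Q k (n+i) := by
      rw [Finset.sum_eq_sum_Ico_succ_bot (by omega)]
      norm_num
    have h2 : ∑ i ∈ Finset.Ico 0 (k+1), Q k (n+i)
        = (∑ i ∈ Finset.range k, Q k (n+i)) + Q k (n+k) := by
      rw [Finset.sum_Ico_succ_top (Nat.zero_le k), Finset.range_eq_Ico]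
    have hQ := Qrec k n hk
    rw [← e1, Finset.sum_range_succ, ← ih]
    omega

theorem stmt_5 (n k : ℕ) (hn : 0 < n) (hk : 0 < k) :
    S n = ∑ i ∈ Finset.range k, Q k (n + i) := by
  rw [S_eq]
  exact (T k hk n).symm
end

section
/- (Generalized Elder theorem) For all positive integers n, k, and r, V_k(n) = Q_{rk}(n) + Q_{rk}(n+k) + Q_{rk}(n+2k) + ... + Q_{rk}(n+(r-1)k), i.e., V_k(n) equals the sum of Q_{rk}(n + ik) for i = 0 to r-1. -/
lemma sum_le_of_le_ms {s t : Multiset ℕ} (h : s ≤ t) : s.sum ≤ t.sum := by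
  have h1 : t - s + s = t := tsub_add_cancel_of_le h
  have h2 : (t - s + s).sum = t.sum := by rw [h1]
  rw [Multiset.sum_add] at h2
  omega

lemma repl_le_of_count {n : ℕ} (p : n.Partition) {m i : ℕ} (h : i ≤ p.parts.count m) :
    Multiset.replicate i m ≤ p.parts :=
  Multiset.le_count_iff_replicate_le.mp h

lemma count_mul_le {n : ℕ} (p : n.Partition) (m : ℕ) : p.parts.count m * m ≤ n := by
  have h := sum_le_of_le_ms (repl_le_of_count p (le_refl (p.parts.count m)))
  simpa [Multiset.sum_replicate, smul_eq_mul, p.parts_sum] using h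

/-- The key bijection: partitions of `n` with at least `i` copies of `m`
correspond to partitions of `n - i*m`. -/
def reduceEquiv (n m i : ℕ) (hm : 0 < m) (h : i * m ≤ n) :
    {p : n.Partition // i ≤ p.parts.count m} ≃ Nat.Partition (n - i * m) where
  toFun p :=
    { parts := p.1.parts - Multiset.replicate i m
      parts_pos := fun {a} ha => p.1.parts_pos (Multiset.mem_of_le (tsub_le_self) ha)
      parts_sum := by
        have hle := repl_le_of_count p.1 p.2
        have h1 : p.1.parts - Multiset.replicate i m + Multiset.replicate i m = p.1.parts :=
          tsub_add_cancel_of_le hle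
        have h2 := congrArg Multiset.sum h1
        rw [Multiset.sum_add, Multiset.sum_replicate, smul_eq_mul, p.1.parts_sum] at h2
        omega }
  invFun q :=
    ⟨{ parts := q.parts + Multiset.replicate i m
       parts_pos := fun {a} ha => by
         rcases Multiset.mem_add.mp ha with ha | ha
         · exact q.parts_pos ha
         · rw [Multiset.eq_of_mem_replicate ha]; exact hm
       parts_sum := by
         rw [Multiset.sum_add, Multiset.sum_replicate, smul_eq_mul, q.parts_sum]
         omega },
     by simp [Multiset.count_replicate]⟩
  left_inv p := by
    apply Subtype.ext
    apply Nat.Partition.ext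
    exact tsub_add_cancel_of_le (repl_le_of_count p.1 p.2)
  right_inv q := by
    apply Nat.Partition.ext
    simp

lemma card_count_ge (n m i : ℕ) (hm : 0 < m) (hi : 0 < i) :
    (Finset.univ.filter fun p : n.Partition => i ≤ p.parts.count m).card
      = if i * m ≤ n then P (n - i * m) else 0 := by
  split_ifs with h
  · rw [← Fintype.card_subtype]
    exact Fintype.card_congr (reduceEquiv n m i hm h)
  · rw [Finset.card_eq_zero, Finset.filter_eq_empty_iff]
    intro p _ hp
    have h1 := count_mul_le p m
    have h2 : i * m ≤ p.parts.count m * m := Nat.mul_le_mul_right m hp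
    omega

lemma count_as_sum {c M : ℕ} (h : c ≤ M) :
    c = ∑ i ∈ Finset.Icc 1 M, (if i ≤ c then 1 else 0) := by
  rw [Finset.sum_boole]
  have : Finset.filter (fun i => i ≤ c) (Finset.Icc 1 M) = Finset.Icc 1 c := by
    ext x
    simp only [Finset.mem_filter, Finset.mem_Icc]
    omega
  rw [this, Nat.card_Icc]
  simp

lemma Q_eq (j n M : ℕ) (hj : 0 < j) (hM : n ≤ M * j) :
    Q j n = ∑ i ∈ Finset.Icc 1 M, (if i * j ≤ n then P (n - i * j) else 0) := by
  unfold Q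
  have step : ∀ p : n.Partition, Multiset.count j p.parts
      = ∑ i ∈ Finset.Icc 1 M, (if i ≤ p.parts.count j then 1 else 0) := by
    intro p
    apply count_as_sum
    have h1 := count_mul_le p j
    by_contra hc
    push_neg at hc
    have : M * j < p.parts.count j * j := (Nat.mul_lt_mul_right hj).mpr hc
    omega
  calc (∑ p : n.Partition, Multiset.count j p.parts)
      = ∑ p : n.Partition, ∑ i ∈ Finset.Icc 1 M,
          (if i ≤ p.parts.count j then 1 else 0) := by
        exact Finset.sum_congr rfl fun p _ => step p
    _ = ∑ i ∈ Finset.Icc 1 M, ∑ p : n.Partition,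
          (if i ≤ p.parts.count j then 1 else 0) := Finset.sum_comm
    _ = ∑ i ∈ Finset.Icc 1 M, (if i * j ≤ n then P (n - i * j) else 0) := by
        refine Finset.sum_congr rfl fun i hi => ?_
        rw [Finset.sum_boole]
        have hi1 : 0 < i := by
          have := Finset.mem_Icc.mp hi; omega
        have := card_count_ge n j i hj hi1
        simpa using this

lemma V_eq (k n M : ℕ) (hk : 0 < k) (hM : n ≤ M * k) :
    V k n = ∑ m ∈ Finset.Icc 1 M, (if m * k ≤ n then P (n - m * k) else 0) := by
  unfold V
  have step : ∀ p : n.Partition,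
      (p.parts.toFinset.filter (fun m => k ≤ p.parts.count m)).card
      = ∑ m ∈ Finset.Icc 1 M, (if k ≤ p.parts.count m then 1 else 0) := by
    intro p
    rw [Finset.sum_boole, Nat.cast_id]
    congr 1
    ext m
    simp only [Finset.mem_filter, Multiset.mem_toFinset, Finset.mem_Icc]
    constructor
    · rintro ⟨hmem, hcnt⟩
      refine ⟨⟨p.parts_pos hmem, ?_⟩, hcnt⟩
      have h1 := count_mul_le p m
      have h2 : k * m ≤ p.parts.count m * m := Nat.mul_le_mul_right m hcnt
      by_contra hc
      push_neg at hc
      have : M * k < m * k := (Nat.mul_lt_mul_right hk).mpr hc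
      have : m * k = k * m := Nat.mul_comm m k
      omega
    · rintro ⟨_, hcnt⟩
      have : 0 < p.parts.count m := lt_of_lt_of_le hk hcnt
      exact ⟨Multiset.count_pos.mp this, hcnt⟩
  calc (∑ p : n.Partition, (p.parts.toFinset.filter (fun m => k ≤ p.parts.count m)).card)
      = ∑ p : n.Partition, ∑ m ∈ Finset.Icc 1 M,
          (if k ≤ p.parts.count m then 1 else 0) :=
        Finset.sum_congr rfl fun p _ => step p
    _ = ∑ m ∈ Finset.Icc 1 M, ∑ p : n.Partition,
          (if k ≤ p.parts.count m then 1 else 0) := Finset.sum_comm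
    _ = ∑ m ∈ Finset.Icc 1 M, (if m * k ≤ n then P (n - m * k) else 0) := by
        refine Finset.sum_congr rfl fun m hm => ?_
        rw [Finset.sum_boole]
        have hm1 : 0 < m := by
          have := Finset.mem_Icc.mp hm; omega
        have h := card_count_ge n m k hm1 hk
        rw [Nat.mul_comm k m] at h
        rw [Nat.cast_id, h]

theorem stmt_6 (n k r : ℕ) (hn : 0 < n) (hk : 0 < k) (hr : 0 < r) :
    V k n = ∑ i ∈ Finset.range r, Q (r * k) (n + i * k) := by
  set M : ℕ := n + r * k with hMdef
  have hrk : 0 < r * k := Nat.mul_pos hr hk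
  have hQ : ∀ i ∈ Finset.range r, Q (r * k) (n + i * k)
      = ∑ j ∈ Finset.Icc 1 M, (if j * (r * k) ≤ n + i * k then P (n + i * k - j * (r * k)) else 0) := by
    intro i hi
    have hi' : i < r := Finset.mem_range.mp hi
    apply Q_eq _ _ _ hrk
    have h1 : i * k ≤ r * k := Nat.mul_le_mul_right k (le_of_lt hi')
    have h2 : M ≤ M * (r * k) := Nat.le_mul_of_pos_right M hrk
    omega
  rw [Finset.sum_congr rfl hQ]
  rw [← Finset.sum_product']
  have hV : V k n = ∑ m ∈ Finset.Icc 1 (r * M), (if m * k ≤ n then P (n - m * k) else 0) := by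
    apply V_eq _ _ _ hk
    have h1 : 1 * M * 1 ≤ r * M * k :=
      Nat.mul_le_mul (Nat.mul_le_mul_right M hr) hk
    omega
  rw [hV]
  refine Finset.sum_nbij' (i := fun m => (r - 1 - (m - 1) % r, (m - 1) / r + 1))
    (j := fun x => x.2 * r - x.1) ?_ ?_ ?_ ?_ ?_
  · intro m hm
    rw [Finset.mem_Icc] at hm
    rw [Finset.mem_product, Finset.mem_range, Finset.mem_Icc]
    have hs : (m - 1) % r < r := Nat.mod_lt _ hr
    have hq : (m - 1) / r < M := by
      rw [Nat.div_lt_iff_lt_mul hr]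
      have hc : M * r = r * M := Nat.mul_comm M r
      omega
    exact ⟨by omega, Nat.le_add_left 1 _, by omega⟩
  · intro x hx
    rw [Finset.mem_product, Finset.mem_range, Finset.mem_Icc] at hx
    rw [Finset.mem_Icc]
    obtain ⟨h1, h2, h3⟩ := hx
    have hra : r ≤ x.2 * r := Nat.le_mul_of_pos_left r h2
    have hrb : x.2 * r ≤ M * r := Nat.mul_le_mul_right r h3
    have hc : M * r = r * M := Nat.mul_comm M r
    omega
  · intro m hm
    rw [Finset.mem_Icc] at hm
    dsimp only
    have hs : (m - 1) % r < r := Nat.mod_lt _ hr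
    have hd : (m - 1) / r * r + (m - 1) % r = m - 1 := by
      rw [Nat.mul_comm]; exact Nat.div_add_mod _ _
    rw [add_mul, one_mul]
    generalize hg : (m - 1) / r * r = t at hd ⊢
    omega
  · rintro ⟨a, b⟩ hx
    rw [Finset.mem_product, Finset.mem_range, Finset.mem_Icc] at hx
    obtain ⟨h1, h2, h3⟩ := hx
    dsimp only at *
    have hra : r ≤ b * r := Nat.le_mul_of_pos_left r h2
    have hv : b * r - a - 1 = r * (b - 1) + (r - 1 - a) := by
      have hc : r * (b - 1) = r * b - r := Nat.mul_sub_one .. |>.symm ▸ rfl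
      have hc2 : r * b = b * r := Nat.mul_comm r b
      have hc3 : r * (b - 1) = r * b - r := by
        rw [Nat.mul_sub, Nat.mul_one]
      omega
    have hdiv : (b * r - a - 1) / r = b - 1 := by
      rw [hv, Nat.mul_add_div hr, Nat.div_eq_of_lt (by omega), Nat.add_zero]
    have hmod : (b * r - a - 1) % r = r - 1 - a := by
      rw [hv, Nat.mul_add_mod, Nat.mod_eq_of_lt (by omega)]
    rw [hdiv, hmod]
    refine Prod.ext ?_ ?_ <;> dsimp only <;> omega
  · intro m hm
    rw [Finset.mem_Icc] at hm
    dsimp only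
    have hs : (m - 1) % r < r := Nat.mod_lt _ hr
    have hd : (m - 1) / r * r + (m - 1) % r = m - 1 := by
      rw [Nat.mul_comm]; exact Nat.div_add_mod _ _
    set s := (m - 1) % r with hsdef
    set q := (m - 1) / r with hqdef
    have hqr : (q + 1) * r = q * r + r := by rw [add_mul, one_mul]
    have hm2 : (q + 1) * r - (r - 1 - s) = m := by omega
    have hmk : m * k = ((q + 1) * r) * k - (r - 1 - s) * k := by
      rw [← Nat.sub_mul, hm2]
    have hB : (r - 1 - s) * k ≤ ((q + 1) * r) * k :=
      Nat.mul_le_mul_right k (by omega)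
    have hassoc : (q + 1) * (r * k) = ((q + 1) * r) * k := by ring
    rw [hassoc]
    generalize hA : ((q + 1) * r) * k = A at hmk hB ⊢
    generalize hBg : (r - 1 - s) * k = B at hmk hB ⊢
    generalize hC : m * k = C at hmk ⊢
    have hcond : C ≤ n ↔ A ≤ n + B := by omega
    by_cases hc : C ≤ n
    · rw [if_pos hc, if_pos (hcond.mp hc)]
      congr 1
      omega
    · rw [if_neg hc, if_neg (fun h => hc (hcond.mpr h))]
end

section
/- For all positive integers n and k, the number of partitions of n+k obtained by taking a partition of n and either (a) adjoining k new parts equal to 1, or (b) increasing by 1 each of some maximal run of k equal parts (i.e., for each part-size m occurring with multiplicity at least k in a partition of n, replacing k copies of m by k copies of m+1), counted as the number of such (partition, operation) pairs, equals Q_k(n+k). In formula: P(n) + V_k(n) = Q_k(n+k). -/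
def partEquiv (N m j : ℕ) (hm : 0 < m) (h : m * j ≤ N) :
    {p : Nat.Partition N // j ≤ p.parts.count m} ≃ Nat.Partition (N - m * j) where
  toFun p := ⟨p.1.parts - Multiset.replicate j m,
    by
      intro i hi
      exact p.1.parts_pos (Multiset.mem_of_le (Multiset.sub_le_self _ _) hi),
    by
      have hle : Multiset.replicate j m ≤ p.1.parts :=
        Multiset.le_count_iff_replicate_le.mp p.2
      have h1 : (p.1.parts - Multiset.replicate j m) + Multiset.replicate j m = p.1.parts :=
        tsub_add_cancel_of_le hle
      have h2 := congrArg Multiset.sum h1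
      rw [Multiset.sum_add, Multiset.sum_replicate, smul_eq_mul, p.1.parts_sum] at h2
      have : j * m = m * j := Nat.mul_comm _ _
      omega⟩
  invFun q := ⟨⟨q.parts + Multiset.replicate j m,
    by
      intro i hi
      rcases Multiset.mem_add.mp hi with h' | h'
      · exact q.parts_pos h'
      · rw [Multiset.eq_of_mem_replicate h']; exact hm,
    by rw [Multiset.sum_add, Multiset.sum_replicate, smul_eq_mul, q.parts_sum]; have : j * m = m * j := Nat.mul_comm _ _; omega⟩,
    by simp [Multiset.count_add, Multiset.count_replicate]⟩
  left_inv p := by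
    have hle : Multiset.replicate j m ≤ p.1.parts :=
      Multiset.le_count_iff_replicate_le.mp p.2
    ext1
    ext1
    exact tsub_add_cancel_of_le hle
  right_inv q := by
    ext1
    exact add_tsub_cancel_right _ _

lemma card_count (N m j : ℕ) (hm : 0 < m) :
    (Finset.univ.filter fun p : Nat.Partition N => j ≤ p.parts.count m).card
      = if m * j ≤ N then P (N - m * j) else 0 := by
  split_ifs with h
  · rw [← Fintype.card_subtype]
    exact Fintype.card_congr (partEquiv N m j hm h)
  · rw [Finset.card_eq_zero, Finset.filter_eq_empty_iff]
    intro p _ hc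
    have hle : Multiset.replicate j m ≤ p.parts :=
      Multiset.le_count_iff_replicate_le.mp hc
    obtain ⟨u, hu⟩ := Multiset.le_iff_exists_add.mp hle
    have h2 := congrArg Multiset.sum hu
    rw [Multiset.sum_add, Multiset.sum_replicate, smul_eq_mul, p.parts_sum] at h2
    have : j * m = m * j := Nat.mul_comm _ _
    omega



lemma count_le (N m : ℕ) (hm : 0 < m) (p : Nat.Partition N) : p.parts.count m ≤ N := by
  have hle : Multiset.replicate (p.parts.count m) m ≤ p.parts :=
    Multiset.le_count_iff_replicate_le.mp le_rfl
  obtain ⟨u, hu⟩ := Multiset.le_iff_exists_add.mp hle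
  have h2 := congrArg Multiset.sum hu
  rw [Multiset.sum_add, Multiset.sum_replicate, smul_eq_mul, p.parts_sum] at h2
  have h3 : p.parts.count m * 1 ≤ p.parts.count m * m := Nat.mul_le_mul_left _ hm
  omega

lemma Qsum (k N : ℕ) (hk : 0 < k) :
    Q k N = ∑ j ∈ Finset.Icc 1 N,
      (Finset.univ.filter fun p : Nat.Partition N => j ≤ p.parts.count k).card := by
  have key : ∀ p : Nat.Partition N, p.parts.count k
      = ∑ j ∈ Finset.Icc 1 N, if j ≤ p.parts.count k then 1 else 0 := by
    intro p
    rw [← Finset.card_filter]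
    have : (Finset.Icc 1 N).filter (fun j => j ≤ p.parts.count k)
        = Finset.Icc 1 (p.parts.count k) := by
      have := count_le N k hk p
      ext x
      simp only [Finset.mem_filter, Finset.mem_Icc]
      omega
    rw [this, Nat.card_Icc]
    omega
  unfold Q
  rw [Finset.sum_congr rfl (fun p _ => key p), Finset.sum_comm]
  exact Finset.sum_congr rfl (fun j _ => (Finset.card_filter _ _).symm)

lemma Vsum (k n : ℕ) (hk : 0 < k) :
    V k n = ∑ m ∈ Finset.Icc 1 n,
      (Finset.univ.filter fun p : Nat.Partition n => k ≤ p.parts.count m).card := by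
  have key : ∀ p : Nat.Partition n,
      (p.parts.toFinset.filter (fun m => k ≤ p.parts.count m)).card
      = ∑ m ∈ Finset.Icc 1 n, if k ≤ p.parts.count m then 1 else 0 := by
    intro p
    rw [← Finset.card_filter]
    congr 1
    ext m
    simp only [Finset.mem_filter, Finset.mem_Icc, Multiset.mem_toFinset]
    constructor
    · rintro ⟨hmem, hc⟩
      refine ⟨⟨p.parts_pos hmem, ?_⟩, hc⟩
      rw [← p.parts_sum]
      exact Multiset.single_le_sum (fun x _ => Nat.zero_le x) m hmem
    · rintro ⟨_, hc⟩
      refine ⟨?_, hc⟩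
      rw [← Multiset.count_pos]
      omega
  unfold V
  rw [Finset.sum_congr rfl (fun p _ => key p), Finset.sum_comm]
  exact Finset.sum_congr rfl (fun j _ => (Finset.card_filter _ _).symm)

theorem stmt_13 (n k : ℕ) (hn : 0 < n) (hk : 0 < k) :
    P n + V k n = Q k (n + k) := by
  rw [Qsum k (n+k) hk, Vsum k n hk]
  rw [Finset.sum_congr rfl (fun j _ => card_count (n+k) k j hk)]
  rw [Finset.sum_congr rfl (fun m hm => card_count n m k
    (by simp only [Finset.mem_Icc] at hm; omega))]
  have h1 : Finset.Icc 1 (n+k) = insert 1 (Finset.Icc 2 (n+k)) := by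
    ext x; simp only [Finset.mem_insert, Finset.mem_Icc]; omega
  rw [h1, Finset.sum_insert (by simp)]
  have h2 : (if k*1 ≤ n+k then P (n+k-k*1) else 0) = P n := by
    rw [if_pos (by omega)]; congr 1; omega
  rw [h2]
  congr 1
  have h3 : ∀ m ∈ Finset.Icc 1 n,
      (if m*k ≤ n then P (n - m*k) else 0)
        = (if k*(m+1) ≤ n+k then P (n+k-k*(m+1)) else 0) := by
    intro m _
    have hc : m*k = k*m := Nat.mul_comm _ _
    have hc2 : k*(m+1) = k*m + k := by ring
    split_ifs with ha hb hb
    · congr 1; omega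
    · omega
    · omega
    · rfl
  rw [Finset.sum_congr rfl h3]
  have h4 : Finset.Icc 1 n ⊆ Finset.Icc 1 (n+k-1) :=
    Finset.Icc_subset_Icc_right (by omega)
  rw [Finset.sum_subset h4 (by
    intro x hx hxn
    simp only [Finset.mem_Icc] at hx hxn
    have : x ≥ n + 1 := by omega
    have : k*(x+1) ≥ x+1 := Nat.le_mul_of_pos_left _ hk
    rw [if_neg]
    have hkx : k*(x+1) = k*x + k := by ring
    have : k*x ≥ x := Nat.le_mul_of_pos_left _ hk
    omega)]
  have h5 : Finset.Icc 2 (n+k) = (Finset.Icc 1 (n+k-1)).image (·+1) := by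
    ext x
    simp only [Finset.mem_image, Finset.mem_Icc]
    constructor
    · intro hx; exact ⟨x-1, by omega, by omega⟩
    · rintro ⟨y, hy, rfl⟩; omega
  rw [h5, Finset.sum_image (by intro x _ y _ h; simp only at h; omega)]
end

section
/- For every positive integer n, S(n) = Σ_{i=0}^{n-1} P(i), where S(n) is the sum over all partitions of n of the number of distinct parts. -/
def addPartEquiv (k m : ℕ) (hm : 0 < m) :
    Nat.Partition k ≃ {p : Nat.Partition (k + m) // m ∈ p.parts} where
  toFun q := ⟨⟨m ::ₘ q.parts,
      by intro i hi; rcases Multiset.mem_cons.1 hi with h | h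
         · exact h ▸ hm
         · exact q.parts_pos h,
      by simp [q.parts_sum, Nat.add_comm]⟩, Multiset.mem_cons_self _ _⟩
  invFun p := ⟨p.1.parts.erase m,
      fun hi => p.1.parts_pos (Multiset.mem_of_mem_erase hi),
      by
        have h := Multiset.cons_erase p.2
        have h2 : (m ::ₘ (p.1.parts.erase m)).sum = k + m := by rw [h]; exact p.1.parts_sum
        simp only [Multiset.sum_cons] at h2
        omega⟩
  left_inv q := by
    ext1
    exact Multiset.erase_cons_head m q.parts
  right_inv p := by
    ext1
    ext1
    exact Multiset.cons_erase p.2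

lemma card_contains (n m : ℕ) (hm : 0 < m) (hmn : m ≤ n) :
    Fintype.card {p : Nat.Partition n // m ∈ p.parts} = P (n - m) := by
  obtain ⟨k, rfl⟩ : ∃ k, n = k + m := ⟨n - m, (Nat.sub_add_cancel hmn).symm⟩
  rw [Nat.add_sub_cancel, P, ← Fintype.card_congr (addPartEquiv k m hm)]

theorem stmt16_aux (n : ℕ) :
    (∑ p : Nat.Partition n, p.parts.toFinset.card) = ∑ i ∈ Finset.range n, P i := by
  have key : ∀ p : Nat.Partition n,
      p.parts.toFinset.card = ∑ m ∈ Finset.Icc 1 n, (if m ∈ p.parts then 1 else 0) := by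
    intro p
    rw [← Finset.sum_filter, ← Finset.card_eq_sum_ones]
    congr 1
    ext m
    simp only [Finset.mem_filter, Finset.mem_Icc, Multiset.mem_toFinset]
    constructor
    · intro hm
      refine ⟨⟨p.parts_pos hm, ?_⟩, hm⟩
      calc m ≤ p.parts.sum := Multiset.single_le_sum (fun x hx => Nat.zero_le x) _ hm
        _ = n := p.parts_sum
    · exact fun h => h.2
  calc (∑ p : Nat.Partition n, p.parts.toFinset.card)
      = ∑ p : Nat.Partition n, ∑ m ∈ Finset.Icc 1 n, (if m ∈ p.parts then 1 else 0) := by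
        exact Finset.sum_congr rfl fun p _ => key p
    _ = ∑ m ∈ Finset.Icc 1 n, ∑ p : Nat.Partition n, (if m ∈ p.parts then 1 else 0) :=
        Finset.sum_comm
    _ = ∑ m ∈ Finset.Icc 1 n, P (n - m) := by
        refine Finset.sum_congr rfl fun m hm => ?_
        rw [Finset.mem_Icc] at hm
        rw [← card_contains n m hm.1 hm.2, Fintype.card_subtype,
          Finset.card_eq_sum_ones, Finset.sum_filter]
    _ = ∑ i ∈ Finset.range n, P (n - (1 + i)) := by
        rw [← Finset.Ico_add_one_right_eq_Icc, Finset.sum_Ico_eq_sum_range]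
        simp
    _ = ∑ i ∈ Finset.range n, P i := by
        rw [← Finset.sum_range_reflect]
        refine Finset.sum_congr rfl fun i hi => ?_
        rw [Finset.mem_range] at hi
        congr 1
        omega

theorem stmt_16 (n : ℕ) (hn : 0 < n) :
    S n = ∑ i ∈ Finset.range n, P i := stmt16_aux n
end
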